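/- Let (A,·,κ) be a finite-dimensional quadratic Zinbiel algebra. Define Δ: A → A⊗A by κ̃(Δ(a₁), a₂⊗a₃) = −κ(a₁, a₂·a₃), where κ̃ is the induced form on A⊗A (κ̃(x₁⊗x₂, y₁⊗y₂) = κ(x₁,y₁)κ(x₂,y₂)). Then (A,Δ) is a Zinbiel coalgebra. -/

import Mathlib

open TensorProduct LinearMap

section Aux
variable {K A : Type*} [Field K] [AddCommGroup A] [Module K A] [FiniteDimensional K A]

/-- Auxiliary equivalence turning a triple tensor into a trilinear form via a
nondegenerate bilinear form. -/
noncomputable def e3 (κ : A →ₗ[K] A →ₗ[K] K) (hnd : LinearMap.BilinForm.Nondegenerate κ) :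
    A ⊗[K] (A ⊗[K] A) ≃ₗ[K] (A →ₗ[K] A →ₗ[K] A →ₗ[K] K) :=
  (TensorProduct.congr (LinearMap.BilinForm.toDual κ hnd)
      (TensorProduct.congr (LinearMap.BilinForm.toDual κ hnd)
        (LinearMap.BilinForm.toDual κ hnd))) ≪≫ₗ
  (TensorProduct.congr (LinearEquiv.refl K _) (dualTensorHomEquiv K A (Module.Dual K A))) ≪≫ₗ
  (dualTensorHomEquiv K A (A →ₗ[K] Module.Dual K A))

lemma e3_tmul (κ : A →ₗ[K] A →ₗ[K] K) (hnd : LinearMap.BilinForm.Nondegenerate κ)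
    (x y z a b c : A) :
    e3 κ hnd (x ⊗ₜ[K] (y ⊗ₜ[K] z)) a b c = κ x a * (κ y b * κ z c) := by
  simp [e3, dualTensorHomEquiv, LinearMap.BilinForm.toDual_def, smul_eq_mul, mul_comm]

end Aux

/-- The coproduct dual to the product of a quadratic Zinbiel algebra via κ
defines a Zinbiel coalgebra. -/
theorem quadratic_zinbiel_dual_coalgebra (K A : Type*) [Field K] [CharZero K]
    [AddCommGroup A] [Module K A] [FiniteDimensional K A]
    (mul : A →ₗ[K] A →ₗ[K] A)
    (hz : ∀ a₁ a₂ a₃ : A,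
      mul a₁ (mul a₂ a₃) = mul (mul a₁ a₂) a₃ + mul (mul a₂ a₁) a₃)
    (κ : A →ₗ[K] A →ₗ[K] K)
    (hskew : ∀ a b : A, κ a b = -κ b a)
    (hnd : ∀ a : A, (∀ b : A, κ a b = 0) → a = 0)
    (hinv : ∀ a₁ a₂ a₃ : A, κ (mul a₁ a₂) a₃ = κ a₂ (mul a₁ a₃ + mul a₃ a₁))
    (κt : A ⊗[K] A →ₗ[K] A ⊗[K] A →ₗ[K] K)
    (hκt : ∀ x₁ x₂ y₁ y₂ : A,
      κt (x₁ ⊗ₜ[K] x₂) (y₁ ⊗ₜ[K] y₂) = κ x₁ y₁ * κ x₂ y₂)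
    (Δ : A →ₗ[K] A ⊗[K] A)
    (hΔ : ∀ a₁ a₂ a₃ : A, κt (Δ a₁) (a₂ ⊗ₜ[K] a₃) = -κ a₁ (mul a₂ a₃)) :
    (lTensor A Δ) ∘ₗ Δ =
      (TensorProduct.assoc K A A A).toLinearMap ∘ₗ
        ((rTensor A Δ) ∘ₗ Δ +
          (rTensor A (TensorProduct.comm K A A).toLinearMap) ∘ₗ (rTensor A Δ) ∘ₗ Δ) := by
  have hndκ : LinearMap.BilinForm.Nondegenerate κ :=
    ⟨hnd, fun b h => hnd b (fun a => by rw [hskew, h a, neg_zero])⟩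
  set E := e3 κ hndκ with hE
  -- pairing of a simple first-factor tensor
  have key1 : ∀ (x : A) (w : A ⊗[K] A) (a b c : A),
      E (x ⊗ₜ[K] w) a b c = κ x a * κt w (b ⊗ₜ[K] c) := by
    intro x w a b c
    induction w using TensorProduct.induction_on with
    | zero => simp
    | tmul y z => rw [hE, e3_tmul, hκt]
    | add u v hu hv => simp [tmul_add, hu, hv, mul_add]
  -- pairing after lTensor Δ
  have key2 : ∀ (t : A ⊗[K] A) (a b c : A),
      E (lTensor A Δ t) a b c = -κt t (a ⊗ₜ[K] mul b c) := by
    intro t a b c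
    induction t using TensorProduct.induction_on with
    | zero => simp
    | tmul x y =>
        rw [lTensor_tmul, key1, hΔ, hκt]; ring
    | add u v hu hv => simp [hu, hv]; ring
  -- pairing of assoc (w ⊗ y)
  have key3 : ∀ (w : A ⊗[K] A) (y a b c : A),
      E ((TensorProduct.assoc K A A A) (w ⊗ₜ[K] y)) a b c
        = κt w (a ⊗ₜ[K] b) * κ y c := by
    intro w y a b c
    induction w using TensorProduct.induction_on with
    | zero => simp
    | tmul u v => rw [assoc_tmul, hE, e3_tmul, hκt]; ring
    | add u v hu hv => simp [add_tmul, hu, hv]; ring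
  -- pairing of assoc (comm w ⊗ y)
  have key4 : ∀ (w : A ⊗[K] A) (y a b c : A),
      E ((TensorProduct.assoc K A A A)
          (((TensorProduct.comm K A A) w) ⊗ₜ[K] y)) a b c
        = κt w (b ⊗ₜ[K] a) * κ y c := by
    intro w y a b c
    induction w using TensorProduct.induction_on with
    | zero => simp
    | tmul u v =>
        rw [TensorProduct.comm_tmul, assoc_tmul, hE, e3_tmul, hκt]; ring
    | add u v hu hv =>
        simp only [map_add, add_tmul, LinearMap.add_apply, hu, hv]; ring
  -- pairing after assoc ∘ rTensor Δ
  have key5 : ∀ (t : A ⊗[K] A) (a b c : A),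
      E ((TensorProduct.assoc K A A A) (rTensor A Δ t)) a b c
        = -κt t ((mul a b) ⊗ₜ[K] c) := by
    intro t a b c
    induction t using TensorProduct.induction_on with
    | zero => simp
    | tmul x y => rw [rTensor_tmul, key3, hΔ, hκt]; ring
    | add u v hu hv => simp [hu, hv]; ring
  -- pairing after assoc ∘ rTensor comm ∘ rTensor Δ
  have key6 : ∀ (t : A ⊗[K] A) (a b c : A),
      E ((TensorProduct.assoc K A A A)
          (rTensor A (TensorProduct.comm K A A).toLinearMap (rTensor A Δ t))) a b c
        = -κt t ((mul b a) ⊗ₜ[K] c) := by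
    intro t a b c
    induction t using TensorProduct.induction_on with
    | zero => simp
    | tmul x y =>
        rw [rTensor_tmul, rTensor_tmul, LinearEquiv.coe_coe, key4, hΔ, hκt]; ring
    | add u v hu hv => simp [hu, hv]; ring
  apply LinearMap.ext
  intro d
  apply E.injective
  apply LinearMap.ext; intro a
  apply LinearMap.ext; intro b
  apply LinearMap.ext; intro c
  simp only [LinearMap.comp_apply, LinearMap.add_apply, map_add, LinearEquiv.coe_coe]
  rw [key2, key5, key6, hΔ, hΔ, hΔ, hz a b c]
  simp [map_add]
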